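/- For any function f on datasets with global ℓ₂-sensitivity Δ (i.e., ‖f(D) − f(D')‖₂ ≤ Δ for all neighboring D, D'), and any σ > 0 and α > 1, the Rényi divergence of order α between N(f(D), σ²Δ² I) and N(f(D'), σ²Δ² I) is at most α / (2σ²). -/

import Mathlib

open MeasureTheory Real

/-- Rényi divergence of order `α` between densities `p, q`:
`D_α(p‖q) = (1/(α−1)) log ∫ p(x)^α q(x)^{1−α} dx`. -/
noncomputable def renyiDivFun {Ω : Type*} [MeasureSpace Ω] (α : ℝ) (p q : Ω → ℝ) : ℝ :=
  (α - 1)⁻¹ * Real.log (∫ x, p x ^ α * q x ^ (1 - α))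

/-- The density of the isotropic Gaussian `N(μ, σ²I)` on `ℝ^d`. -/
noncomputable def gaussPDF (d : ℕ) (μ : EuclideanSpace ℝ (Fin d)) (σ : ℝ)
    (x : EuclideanSpace ℝ (Fin d)) : ℝ :=
  (2 * π * σ ^ 2) ^ (-(d : ℝ) / 2) * Real.exp (-‖x - μ‖ ^ 2 / (2 * σ ^ 2))

/-- The isotropic Gaussian density integrates to `1`. -/
lemma gauss_norm (d : ℕ) (m : EuclideanSpace ℝ (Fin d)) (s : ℝ) (hs : 0 < s) :
    ∫ x : EuclideanSpace ℝ (Fin d),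
      (2 * π * s ^ 2) ^ (-(d : ℝ) / 2) * Real.exp (-‖x - m‖ ^ 2 / (2 * s ^ 2)) = 1 := by
  rw [integral_const_mul]
  rw [show (fun x : EuclideanSpace ℝ (Fin d) => Real.exp (-‖x - m‖ ^ 2 / (2 * s ^ 2)))
      = fun x => Real.exp (-(2 * s ^ 2)⁻¹ * ‖x - m‖ ^ 2) from by
    funext x; congr 1; field_simp]
  rw [integral_sub_right_eq_self (fun x : EuclideanSpace ℝ (Fin d) =>
        Real.exp (-(2 * s ^ 2)⁻¹ * ‖x‖ ^ 2)) m]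
  rw [GaussianFourier.integral_rexp_neg_mul_sq_norm (by positivity)]
  rw [finrank_euclideanSpace_fin]
  rw [show π / (2 * s ^ 2)⁻¹ = 2 * π * s ^ 2 by field_simp,
    ← Real.rpow_add (by positivity), neg_div, neg_add_cancel, Real.rpow_zero]

/-- Convexity-type identity for squared norms. -/
lemma norm_combo {d : ℕ} (μ ν x : EuclideanSpace ℝ (Fin d)) (α : ℝ) :
    α * ‖x - μ‖^2 + (1-α) * ‖x - ν‖^2
      = ‖x - (α • μ + (1-α) • ν)‖^2 + α*(1-α)*‖μ-ν‖^2 := by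
  simp only [← real_inner_self_eq_norm_sq, inner_sub_left, inner_sub_right,
    inner_add_left, inner_add_right, real_inner_smul_left, real_inner_smul_right,
    real_inner_comm x μ, real_inner_comm x ν, real_inner_comm ν μ]
  ring

/-- The Rényi integral between two isotropic Gaussians of the same variance. -/
lemma key_integral {d : ℕ} (μ ν : EuclideanSpace ℝ (Fin d)) (s α : ℝ)
    (hs : 0 < s) :
    ∫ x, gaussPDF d μ s x ^ α * gaussPDF d ν s x ^ (1-α)
      = Real.exp (α*(α-1)*‖μ-ν‖^2/(2*s^2)) := by
  set m : EuclideanSpace ℝ (Fin d) := α • μ + (1-α) • ν with hm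
  set C : ℝ := (2 * π * s ^ 2) ^ (-(d : ℝ) / 2) with hC
  have hCpos : 0 < C := Real.rpow_pos_of_pos (by positivity) _
  have hpt : ∀ x, gaussPDF d μ s x ^ α * gaussPDF d ν s x ^ (1-α)
      = (C * Real.exp (-‖x - m‖^2/(2*s^2))) * Real.exp (α*(α-1)*‖μ-ν‖^2/(2*s^2)) := by
    intro x
    unfold gaussPDF
    rw [Real.mul_rpow hCpos.le (Real.exp_nonneg _),
        Real.mul_rpow hCpos.le (Real.exp_nonneg _),
        ← Real.exp_mul, ← Real.exp_mul]
    rw [show C ^ α * Real.exp (-‖x - μ‖ ^ 2 / (2 * s ^ 2) * α) *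
          (C ^ (1-α) * Real.exp (-‖x - ν‖ ^ 2 / (2 * s ^ 2) * (1-α)))
        = (C ^ α * C ^ (1-α)) *
          (Real.exp (-‖x - μ‖ ^ 2 / (2 * s ^ 2) * α) *
           Real.exp (-‖x - ν‖ ^ 2 / (2 * s ^ 2) * (1-α))) from by ring]
    rw [← Real.rpow_add hCpos, show α + (1-α) = 1 by ring, Real.rpow_one,
        ← Real.exp_add, mul_assoc, ← Real.exp_add]
    congr 1
    have h := norm_combo μ ν x α
    have hs2 : (2 * s ^ 2) ≠ 0 := by positivity
    rw [← hm] at h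
    congr 1
    field_simp
    nlinarith [h]
  simp only [hpt]
  rw [integral_mul_const, gauss_norm d m s hs, one_mul]

/-- RDP guarantee of the Gaussian mechanism: if `f` has global ℓ₂-sensitivity
`Δ` (over a neighboring relation on datasets), then for any `σ > 0` and
`α > 1`, the Rényi divergence of order `α` between `N(f(D), σ²Δ²I)` and
`N(f(D'), σ²Δ²I)` is at most `α/(2σ²)` for all neighboring `D, D'`. -/
theorem gaussian_mechanism_rdp {Dataset : Type*} (Neighbor : Dataset → Dataset → Prop)
    (d : ℕ) (f : Dataset → EuclideanSpace ℝ (Fin d)) (Δ σ α : ℝ)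
    (hΔ : 0 ≤ Δ) (hσ : 0 < σ) (hα : 1 < α)
    (hsens : ∀ D D', Neighbor D D' → ‖f D - f D'‖ ≤ Δ) :
    ∀ D D', Neighbor D D' →
      renyiDivFun α (gaussPDF d (f D) (σ * Δ)) (gaussPDF d (f D') (σ * Δ)) ≤
        α / (2 * σ ^ 2) := by
  intro D D' hDD'
  have hrhs : 0 < α / (2 * σ ^ 2) := by positivity
  rcases eq_or_lt_of_le hΔ with hΔ0 | hΔpos
  · -- degenerate case Δ = 0
    subst hΔ0
    rcases Nat.eq_zero_or_pos d with hd | hd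
    · subst hd
      have h : ∀ x : EuclideanSpace ℝ (Fin 0), x - f D = 0 :=
        fun x => Subsingleton.elim _ _
      have h' : ∀ x : EuclideanSpace ℝ (Fin 0), x - f D' = 0 :=
        fun x => Subsingleton.elim _ _
      have hv : (volume (Set.univ : Set (EuclideanSpace ℝ (Fin 0)))) = 1 := by
        rw [← Set.preimage_univ (f := (MeasurableEquiv.toLp 2 (Fin 0 → ℝ)).symm),
          (EuclideanSpace.volume_preserving_symm_measurableEquiv_toLp (Fin 0)).measure_preimage
            MeasurableSet.univ.nullMeasurableSet]
        rw [MeasureTheory.volume_pi, Measure.pi_univ]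
        simp
      have : renyiDivFun α (gaussPDF 0 (f D) (σ * 0)) (gaussPDF 0 (f D') (σ * 0)) = 0 := by
        unfold renyiDivFun gaussPDF
        simp only [h, h', norm_zero]
        norm_num
        rw [measureReal_def, hv]
        simp
      rw [this]; exact hrhs.le
    · have hpdf : ∀ μ x, gaussPDF d μ (σ * 0) x = 0 := by
        intro μ x
        unfold gaussPDF
        rw [show 2 * π * (σ * 0) ^ 2 = 0 by ring,
          Real.zero_rpow (by
            have hd' : (0:ℝ) < (d:ℝ) := Nat.cast_pos.mpr hd
            intro hcontra
            linarith), zero_mul]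
      have : renyiDivFun α (gaussPDF d (f D) (σ * 0)) (gaussPDF d (f D') (σ * 0)) = 0 := by
        unfold renyiDivFun
        simp only [hpdf]
        rw [Real.zero_rpow (by linarith), zero_mul]
        simp
      rw [this]; exact hrhs.le
  · -- main case Δ > 0
    have hs : 0 < σ * Δ := by positivity
    unfold renyiDivFun
    rw [key_integral (f D) (f D') (σ * Δ) α hs, Real.log_exp]
    have hαpos : 0 < α - 1 := by linarith
    have hN : ‖f D - f D'‖ ^ 2 ≤ Δ ^ 2 := by
      have := hsens D D' hDD'
      nlinarith [norm_nonneg (f D - f D')]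
    rw [show (α - 1)⁻¹ * (α * (α - 1) * ‖f D - f D'‖ ^ 2 / (2 * (σ * Δ) ^ 2))
        = α * ‖f D - f D'‖ ^ 2 / (2 * (σ * Δ) ^ 2) from by
      field_simp]
    rw [div_le_div_iff₀ (by positivity) (by positivity)]
    nlinarith [mul_nonneg (mul_nonneg (by linarith : (0:ℝ) ≤ α)
      (by positivity : (0:ℝ) ≤ 2 * σ ^ 2)) (sub_nonneg.mpr hN)]
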